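/- In the group Spin(3) ⊂ Cl(3)⁰, the elements x_i = (1/√2)(1 + e₂e₃) and x_j = (1/√2)(1 + e₁e₂) satisfy the braid relation x_j x_i x_j = x_i x_j x_i, the relations x_i⁸ = 1 and x_j⁸ = 1, and the relation x_i⁻¹ x_j² x_i = x_j² x_i². -/
import Mathlib


/-- The negative definite standard quadratic form `-q₃` on `ℝ³`. -/
noncomputable def Qneg3 : QuadraticForm ℝ (Fin 3 → ℝ) :=
  QuadraticMap.weightedSumSquares ℝ (fun _ : Fin 3 => (-1 : ℝ))

/-- The image of the `i`-th standard basis vector of `ℝ³` in `Cl(3)`. -/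
noncomputable def e (i : Fin 3) : CliffordAlgebra Qneg3 :=
  CliffordAlgebra.ι Qneg3 (Pi.single i 1)

/-- `xᵢ = (1/√2)(1 + e₂e₃)`. -/
noncomputable def xi : CliffordAlgebra Qneg3 :=
  (Real.sqrt 2)⁻¹ • (1 + e 1 * e 2)

/-- `xⱼ = (1/√2)(1 + e₁e₂)`. -/
noncomputable def xj : CliffordAlgebra Qneg3 :=
  (Real.sqrt 2)⁻¹ • (1 + e 0 * e 1)

lemma Qsingle (i : Fin 3) : Qneg3 (Pi.single i 1) = -1 := by
  simp [Qneg3, QuadraticMap.weightedSumSquares_apply, Pi.single_apply, Finset.sum_ite_eq']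

lemma esq (i : Fin 3) : e i * e i = -1 := by
  rw [e, CliffordAlgebra.ι_sq_scalar, Qsingle, map_neg, map_one]

lemma eswap (i j : Fin 3) (h : i ≠ j) : e i * e j = -(e j * e i) := by
  refine CliffordAlgebra.ι_mul_ι_comm_of_isOrtho ?_
  fin_cases i <;> fin_cases j <;> simp_all [QuadraticMap.IsOrtho, Qneg3,
    QuadraticMap.weightedSumSquares_apply, Fin.sum_univ_three, Pi.single_apply]

lemma hc : (Real.sqrt 2)⁻¹ * (Real.sqrt 2)⁻¹ = 2⁻¹ := by
  rw [← mul_inv, Real.mul_self_sqrt (by norm_num)]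

/-- `a² = -1` for `a = e₁ e₂`. -/
lemma sq_neg_one {i j : Fin 3} (h : i ≠ j) : (e i * e j) * (e i * e j) = -1 := by
  calc (e i * e j) * (e i * e j) = e i * (e j * e i) * e j := by noncomm_ring
    _ = e i * (-(e i * e j)) * e j := by rw [eswap j i h.symm]
    _ = -((e i * e i) * (e j * e j)) := by noncomm_ring
    _ = -((-1) * (-1)) := by rw [esq, esq]
    _ = -1 := by noncomm_ring

lemma hab : (e 1 * e 2) * (e 0 * e 1) = -((e 0 * e 1) * (e 1 * e 2)) := by
  have h1 : (e 1 * e 2) * (e 0 * e 1) = e 0 * e 2 := by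
    calc (e 1 * e 2) * (e 0 * e 1) = e 1 * ((e 2 * e 0) * e 1) := by noncomm_ring
      _ = e 1 * ((-(e 0 * e 2)) * e 1) := by rw [eswap 2 0 (by decide)]
      _ = -((e 1 * e 0) * (e 2 * e 1)) := by noncomm_ring
      _ = -((-(e 0 * e 1)) * (-(e 1 * e 2))) := by
          rw [eswap 1 0 (by decide), eswap 2 1 (by decide)]
      _ = -(e 0 * ((e 1 * e 1) * e 2)) := by noncomm_ring
      _ = -(e 0 * ((-1) * e 2)) := by rw [esq]
      _ = e 0 * e 2 := by noncomm_ring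
  have h2 : (e 0 * e 1) * (e 1 * e 2) = -(e 0 * e 2) := by
    calc (e 0 * e 1) * (e 1 * e 2) = e 0 * ((e 1 * e 1) * e 2) := by noncomm_ring
      _ = e 0 * ((-1) * e 2) := by rw [esq]
      _ = -(e 0 * e 2) := by noncomm_ring
  rw [h1, h2, neg_neg]

section core
local notation "a" => e 1 * e 2
local notation "b" => e 0 * e 1

lemma ha' : (a) * (a) = -1 := sq_neg_one (by decide)
lemma hb' : (b) * (b) = -1 := sq_neg_one (by decide)
lemma hba : (b) * (a) = -((a) * (b)) := by rw [hab, neg_neg]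

lemma t_bab : (b) * ((a) * (b)) = a := by
  calc (b) * ((a) * (b)) = (b) * (-((b) * (a))) := by rw [hab]
    _ = -(((b) * (b)) * (a)) := by noncomm_ring
    _ = -((-1) * (a)) := by rw [hb']
    _ = a := by noncomm_ring

lemma t_aba : (a) * ((b) * (a)) = b := by
  calc (a) * ((b) * (a)) = (a) * (-((a) * (b))) := by rw [hba]
    _ = -(((a) * (a)) * (b)) := by noncomm_ring
    _ = -((-1) * (b)) := by rw [ha']
    _ = b := by noncomm_ring

lemma core_braid : (1 + b) * (1 + a) * (1 + b) = (1 + a) * (1 + b) * (1 + a) := by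
  have hL : (1 + b) * (1 + a) * (1 + b)
      = (1 + (b) * (b)) + ((a) + ((b) + (b))) + ((a) * (b) + (b) * (a)) + (b) * ((a) * (b)) := by
    noncomm_ring
  have hR : (1 + a) * (1 + b) * (1 + a)
      = (1 + (a) * (a)) + ((b) + ((a) + (a))) + ((b) * (a) + (a) * (b)) + (a) * ((b) * (a)) := by
    noncomm_ring
  rw [hL, hR, ha', hb', t_bab, t_aba, hba]
  abel

lemma core_last : (1 - a) * (b) * (1 + a) = (b) * (a) + (b) * (a) := by
  have hE : (1 - a) * (b) * (1 + a)
      = ((b) + (b) * (a)) - ((a) * (b) + (a) * ((b) * (a))) := by noncomm_ring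
  rw [hE, t_aba, hab]
  abel

end core

lemma core_inv {t : CliffordAlgebra Qneg3} (ht : t * t = -1) : (1 - t) * (1 + t) = 1 + 1 := by
  have hE : (1 - t) * (1 + t) = 1 - t * t := by noncomm_ring
  rw [hE, ht]; abel

lemma core_inv' {t : CliffordAlgebra Qneg3} (ht : t * t = -1) : (1 + t) * (1 - t) = 1 + 1 := by
  have hE : (1 + t) * (1 - t) = 1 - t * t := by noncomm_ring
  rw [hE, ht]; abel

lemma core_sq {t : CliffordAlgebra Qneg3} (ht : t * t = -1) : (1 + t) * (1 + t) = t + t := by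
  have hE : (1 + t) * (1 + t) = (1 + t * t) + (t + t) := by noncomm_ring
  rw [hE, ht]; abel

lemma half_smul_double (x : CliffordAlgebra Qneg3) : (2 : ℝ)⁻¹ • (x + x) = x := by
  rw [← two_smul ℝ x, smul_smul]; norm_num

lemma xi_sq : xi * xi = e 1 * e 2 := by
  rw [xi, smul_mul_smul_comm, hc, core_sq (sq_neg_one (by decide)), half_smul_double]

lemma xj_sq : xj * xj = e 0 * e 1 := by
  rw [xj, smul_mul_smul_comm, hc, core_sq (sq_neg_one (by decide)), half_smul_double]

lemma xi_inv_left : ((Real.sqrt 2)⁻¹ • (1 - e 1 * e 2)) * xi = 1 := by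
  rw [xi, smul_mul_smul_comm, hc, core_inv (sq_neg_one (by decide)), half_smul_double]

lemma xi_inv_right : xi * ((Real.sqrt 2)⁻¹ • (1 - e 1 * e 2)) = 1 := by
  rw [xi, smul_mul_smul_comm, hc, core_inv' (sq_neg_one (by decide)), half_smul_double]

lemma star_e (i j : Fin 3) (h : i ≠ j) : star (e i * e j) = -(e i * e j) := by
  rw [e, e, CliffordAlgebra.star_def, map_mul, CliffordAlgebra.involute_ι,
    CliffordAlgebra.involute_ι, neg_mul_neg, CliffordAlgebra.reverse.map_mul,
    CliffordAlgebra.reverse_ι, CliffordAlgebra.reverse_ι, ← e, ← e, eswap j i h.symm]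

lemma star_xi : star xi = (Real.sqrt 2)⁻¹ • (1 - e 1 * e 2) := by
  rw [xi, CliffordAlgebra.star_def, map_smul, map_smul,
    ← CliffordAlgebra.star_def (1 + e 1 * e 2), star_add, star_one, star_e 1 2 (by decide),
    ← sub_eq_add_neg]

lemma star_xj : star xj = (Real.sqrt 2)⁻¹ • (1 - e 0 * e 1) := by
  rw [xj, CliffordAlgebra.star_def, map_smul, map_smul,
    ← CliffordAlgebra.star_def (1 + e 0 * e 1), star_add, star_one, star_e 0 1 (by decide),
    ← sub_eq_add_neg]

lemma xj_inv_left : ((Real.sqrt 2)⁻¹ • (1 - e 0 * e 1)) * xj = 1 := by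
  rw [xj, smul_mul_smul_comm, hc, core_inv (sq_neg_one (by decide)), half_smul_double]

lemma xj_inv_right : xj * ((Real.sqrt 2)⁻¹ • (1 - e 0 * e 1)) = 1 := by
  rw [xj, smul_mul_smul_comm, hc, core_inv' (sq_neg_one (by decide)), half_smul_double]

/-- Unit built from a vector with `Q v = -1`. -/
noncomputable def mkUnit (v : Fin 3 → ℝ) (h : Qneg3 v = -1) : (CliffordAlgebra Qneg3)ˣ where
  val := CliffordAlgebra.ι Qneg3 v
  inv := -CliffordAlgebra.ι Qneg3 v
  val_inv := by rw [mul_neg, CliffordAlgebra.ι_sq_scalar, h, map_neg, map_one, neg_neg]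
  inv_val := by rw [neg_mul, CliffordAlgebra.ι_sq_scalar, h, map_neg, map_one, neg_neg]

lemma mkUnit_mem (v : Fin 3 → ℝ) (h : Qneg3 v = -1) : mkUnit v h ∈ lipschitzGroup Qneg3 :=
  Subgroup.subset_closure ⟨v, rfl⟩

lemma mem_spin_of (u v : Fin 3 → ℝ) (hu : Qneg3 u = -1) (hv : Qneg3 v = -1)
    {x : CliffordAlgebra Qneg3}
    (hx : CliffordAlgebra.ι Qneg3 u * CliffordAlgebra.ι Qneg3 v = x)
    (hst : star x * x = 1) (hxs : x * star x = 1) : x ∈ spinGroup Qneg3 := by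
  rw [spinGroup.mem_iff]
  constructor
  · rw [pinGroup, Submonoid.mem_inf]
    refine ⟨⟨mkUnit u hu * mkUnit v hv, mul_mem (mkUnit_mem u hu) (mkUnit_mem v hv), hx⟩, ?_⟩
    exact Unitary.mem_iff.2 ⟨hst, hxs⟩
  · have h0 : x ∈ CliffordAlgebra.evenOdd Qneg3 0 := by
      rw [← hx]; exact CliffordAlgebra.ι_mul_ι_mem_evenOdd_zero Qneg3 u v
    rwa [← CliffordAlgebra.even_toSubmodule, Subalgebra.mem_toSubmodule] at h0

lemma Qv12 : Qneg3 ((Real.sqrt 2)⁻¹ • (Pi.single 2 1 - Pi.single 1 1)) = -1 := by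
  rw [QuadraticMap.map_smul]
  simp [Qneg3, QuadraticMap.weightedSumSquares_apply, Fin.sum_univ_three, Pi.single_apply]
  rw [← mul_inv, Real.mul_self_sqrt (by norm_num)]
  norm_num

lemma Qv01 : Qneg3 ((Real.sqrt 2)⁻¹ • (Pi.single 1 1 - Pi.single 0 1)) = -1 := by
  rw [QuadraticMap.map_smul]
  simp [Qneg3, QuadraticMap.weightedSumSquares_apply, Fin.sum_univ_three, Pi.single_apply]
  rw [← mul_inv, Real.mul_self_sqrt (by norm_num)]
  norm_num

lemma prod_eq (i j : Fin 3) :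
    CliffordAlgebra.ι Qneg3 (Pi.single i 1) *
      CliffordAlgebra.ι Qneg3 ((Real.sqrt 2)⁻¹ • (Pi.single j 1 - Pi.single i 1))
    = (Real.sqrt 2)⁻¹ • (1 + e i * e j) := by
  rw [map_smul, map_sub, mul_smul_comm, mul_sub, ← e, ← e, esq, sub_neg_eq_add, add_comm]

/-- In `Spin(3) ⊂ Cl(3)⁰`, the elements `xᵢ = (1/√2)(1+e₂e₃)` and `xⱼ = (1/√2)(1+e₁e₂)`
satisfy the braid relation `xⱼxᵢxⱼ = xᵢxⱼxᵢ`, have order dividing 8, and satisfy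
`xᵢ⁻¹ xⱼ² xᵢ = xⱼ² xᵢ²` (where `xᵢ⁻¹ = (1/√2)(1 − e₂e₃)`). -/
theorem stmt16 :
    xi ∈ spinGroup Qneg3 ∧ xj ∈ spinGroup Qneg3 ∧
    xj * xi * xj = xi * xj * xi ∧
    xi ^ 8 = 1 ∧ xj ^ 8 = 1 ∧
    ((Real.sqrt 2)⁻¹ • (1 - e 1 * e 2)) * xi = 1 ∧
    xi * ((Real.sqrt 2)⁻¹ • (1 - e 1 * e 2)) = 1 ∧
    ((Real.sqrt 2)⁻¹ • (1 - e 1 * e 2)) * xj ^ 2 * xi = xj ^ 2 * xi ^ 2 := by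
  refine ⟨?_, ?_, ?_, ?_, ?_, xi_inv_left, xi_inv_right, ?_⟩
  · exact mem_spin_of _ _ (Qsingle 1) Qv12 (prod_eq 1 2)
      (by rw [star_xi]; exact xi_inv_left) (by rw [star_xi]; exact xi_inv_right)
  · exact mem_spin_of _ _ (Qsingle 0) Qv01 (prod_eq 0 1)
      (by rw [star_xj]; exact xj_inv_left) (by rw [star_xj]; exact xj_inv_right)
  · rw [xi, xj, smul_mul_smul_comm, smul_mul_smul_comm, smul_mul_smul_comm, smul_mul_smul_comm,
      core_braid]
  · rw [show (8 : ℕ) = 2 * 2 * 2 from rfl, pow_mul, pow_mul, pow_two xi, xi_sq,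
      pow_two (e 1 * e 2), sq_neg_one (show (1:Fin 3) ≠ 2 by decide),
      pow_two (-1 : CliffordAlgebra Qneg3), neg_one_mul, neg_neg]
  · rw [show (8 : ℕ) = 2 * 2 * 2 from rfl, pow_mul, pow_mul, pow_two xj, xj_sq,
      pow_two (e 0 * e 1), sq_neg_one (show (0:Fin 3) ≠ 1 by decide),
      pow_two (-1 : CliffordAlgebra Qneg3), neg_one_mul, neg_neg]
  · rw [pow_two, pow_two, xj_sq, xi_sq, xi, smul_mul_assoc, smul_mul_smul_comm, hc,
      core_last, half_smul_double]
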